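/- If A ∈ SO(n) is a critical point of f_C(A) = Σᵢ cᵢ·Aᵢᵢ (with 0 ≤ c₁ < c₂ < ... < cₙ), then A is a diagonal matrix with each diagonal entry equal to ±1. -/

import Mathlib

attribute [local instance] Matrix.normedAddCommGroup Matrix.normedSpace

/-- `A ∈ SO(n)` is a critical point of `f_C` if the derivative of `f_C` along every
differentiable curve in `SO(n)` through `A` vanishes (i.e. the differential of `f_C` at `A`
vanishes on the tangent space `T_A SO(n)`). -/
def IsCritPt (n : ℕ) (c : Fin n → ℝ) (A : Matrix (Fin n) (Fin n) ℝ) : Prop :=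
  ∀ γ : ℝ → Matrix (Fin n) (Fin n) ℝ,
    (∀ t, γ t ∈ Matrix.specialOrthogonalGroup (Fin n) ℝ) → γ 0 = A →
    DifferentiableAt ℝ γ 0 → deriv (fun t => ∑ i, c i * γ t i i) 0 = 0

namespace CritAux

open Matrix Real

variable {n : ℕ}

/-- Givens rotation by angle `t` in the `(i,j)` coordinate plane. -/
noncomputable def R (i j : Fin n) (t : ℝ) : Matrix (Fin n) (Fin n) ℝ :=
  1 + (Real.cos t - 1) • (single i i (1:ℝ) + single j j 1)
    + Real.sin t • (single i j (1:ℝ) - single j i 1)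

lemma rot_mul (P Q : Matrix (Fin n) (Fin n) ℝ) (s t : ℝ)
    (PP : P * P = P) (PQ : P * Q = Q) (QP : Q * P = Q) (QQ : Q * Q = -P) :
    (1 + (Real.cos s - 1) • P + Real.sin s • Q) * (1 + (Real.cos t - 1) • P + Real.sin t • Q) =
      1 + (Real.cos (s + t) - 1) • P + Real.sin (s + t) • Q := by
  simp only [add_mul, mul_add, smul_mul_assoc, mul_smul_comm, one_mul, mul_one,
    PP, PQ, QP, QQ, smul_smul, Real.cos_add, Real.sin_add, smul_neg]
  module

variable {i j : Fin n}

lemma PP' (hij : i ≠ j) :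
    (single i i (1:ℝ) + single j j 1) *
      (single i i (1:ℝ) + single j j 1)
      = single i i (1:ℝ) + single j j 1 := by
  simp [add_mul, mul_add, single_mul_single_same, single_mul_single_of_ne, hij, hij.symm]

lemma PQ' (hij : i ≠ j) :
    (single i i (1:ℝ) + single j j 1) *
      (single i j (1:ℝ) - single j i 1)
      = single i j (1:ℝ) - single j i 1 := by
  simp only [add_mul, mul_sub, single_mul_single_same, single_mul_single_of_ne, hij, hij.symm,
    one_mul, ne_eq, not_false_iff]
  abel

lemma QP' (hij : i ≠ j) :
    (single i j (1:ℝ) - single j i 1) *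
      (single i i (1:ℝ) + single j j 1)
      = single i j (1:ℝ) - single j i 1 := by
  simp only [sub_mul, mul_add, single_mul_single_same, single_mul_single_of_ne, hij, hij.symm,
    one_mul, ne_eq, not_false_iff]
  abel

lemma QQ' (hij : i ≠ j) :
    (single i j (1:ℝ) - single j i 1) *
      (single i j (1:ℝ) - single j i 1)
      = -(single i i (1:ℝ) + single j j 1) := by
  simp only [sub_mul, mul_sub, single_mul_single_same, single_mul_single_of_ne, hij, hij.symm,
    one_mul, ne_eq, not_false_iff]
  abel

lemma R_zero : R i j 0 = 1 := by simp [R]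

lemma R_mul (hij : i ≠ j) (s t : ℝ) : R i j s * R i j t = R i j (s + t) :=
  rot_mul _ _ s t (PP' hij) (PQ' hij) (QP' hij) (QQ' hij)

lemma transpose_std (a b : Fin n) : (single a b (1:ℝ))ᵀ = single b a 1 := by
  ext k l
  simp [Matrix.single, Matrix.transpose_apply, and_comm]

lemma R_transpose (t : ℝ) : (R i j t)ᵀ = R i j (-t) := by
  simp only [R, transpose_add, transpose_sub, transpose_smul, Real.cos_neg, Real.sin_neg,
    Matrix.transpose_one, neg_smul, transpose_std]
  module

lemma R_mem (hij : i ≠ j) (t : ℝ) : R i j t ∈ specialOrthogonalGroup (Fin n) ℝ := by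
  have hstar : star (R i j t) = R i j (-t) := by
    rw [Matrix.star_eq_conjTranspose, conjTranspose_eq_transpose_of_trivial, R_transpose]
  have horth : R i j t * star (R i j t) = 1 := by
    rw [hstar, R_mul hij, add_neg_cancel, R_zero]
  have hdet2 : (R i j t).det * (R i j t).det = 1 := by
    have h := congrArg Matrix.det horth
    rwa [Matrix.det_mul, hstar, ← R_transpose, Matrix.det_transpose, Matrix.det_one] at h
  have hsq : R i j (t / 2) * R i j (t / 2) = R i j t := by rw [R_mul hij]; ring_nf
  have hdet : (R i j t).det = 1 := by
    have h0 : (0:ℝ) ≤ (R i j t).det := by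
      rw [← hsq, Matrix.det_mul]; exact mul_self_nonneg _
    rcases mul_self_eq_one_iff.mp hdet2 with h | h
    · exact h
    · nlinarith
  exact Matrix.mem_specialUnitaryGroup_iff.mpr ⟨Matrix.mem_unitaryGroup_iff.mpr horth, hdet⟩

/-- The key consequence of criticality along a curve `t ↦ A + (cos t - 1) • M + sin t • N`. -/
lemma key (c : Fin n → ℝ) (A M N : Matrix (Fin n) (Fin n) ℝ)
    (hmem : ∀ t : ℝ, (A + (Real.cos t - 1) • M + Real.sin t • N) ∈
      specialOrthogonalGroup (Fin n) ℝ)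
    (hcrit : IsCritPt n c A) : ∑ k, c k * N k k = 0 := by
  set γ : ℝ → Matrix (Fin n) (Fin n) ℝ :=
    fun t => A + (Real.cos t - 1) • M + Real.sin t • N with hγ
  have hγ0 : γ 0 = A := by simp [hγ]
  have hdiff : DifferentiableAt ℝ γ 0 := by
    exact ((differentiableAt_const A).add
      ((Real.differentiable_cos.differentiableAt.sub (differentiableAt_const 1)).smul_const
        M)).add (Real.differentiable_sin.differentiableAt.smul_const N)
  have hd := hcrit γ hmem hγ0 hdiff
  have hfun : (fun t => ∑ k, c k * γ t k k)
      = fun t => (∑ k, c k * A k k) + (Real.cos t - 1) * (∑ k, c k * M k k)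
          + Real.sin t * (∑ k, c k * N k k) := by
    funext t
    simp only [hγ, Matrix.add_apply, Matrix.smul_apply, smul_eq_mul, Finset.mul_sum,
      ← Finset.sum_add_distrib]
    exact Finset.sum_congr rfl fun k _ => by ring
  rw [hfun] at hd
  have hder : HasDerivAt (fun t => (∑ k, c k * A k k)
      + (Real.cos t - 1) * (∑ k, c k * M k k) + Real.sin t * (∑ k, c k * N k k))
      (∑ k, c k * N k k) 0 := by
    have h1 := ((hasDerivAt_const (0:ℝ) (∑ k, c k * A k k)).add
      (((Real.hasDerivAt_cos 0).sub_const 1).mul_const (∑ k, c k * M k k))).add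
      ((Real.hasDerivAt_sin 0).mul_const (∑ k, c k * N k k))
    simp at h1
    exact h1
  rwa [hder.deriv] at hd

lemma mul_R (A : Matrix (Fin n) (Fin n) ℝ) (t : ℝ) :
    A * R i j t = A + (Real.cos t - 1) • (A * (single i i (1:ℝ) + single j j 1))
      + Real.sin t • (A * (single i j (1:ℝ) - single j i 1)) := by
  simp only [R, mul_add, mul_one, mul_smul_comm]

lemma R_mul_left (A : Matrix (Fin n) (Fin n) ℝ) (t : ℝ) :
    R i j t * A = A + (Real.cos t - 1) • ((single i i (1:ℝ) + single j j 1) * A)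
      + Real.sin t • ((single i j (1:ℝ) - single j i 1) * A) := by
  simp only [R, add_mul, one_mul, smul_mul_assoc]

end CritAux

open Matrix CritAux in
/-- If `A ∈ SO(n)` is a critical point of `f_C(A) = ∑ i, c i * A i i`
(with `0 ≤ c 0 < c 1 < ... < c (n-1)`), then `A` is diagonal with diagonal entries `±1`. -/
theorem critPt_isDiag (n : ℕ) (c : Fin n → ℝ) (hc : StrictMono c) (hc0 : ∀ i, 0 ≤ c i)
    (A : Matrix (Fin n) (Fin n) ℝ) (hA : A ∈ Matrix.specialOrthogonalGroup (Fin n) ℝ)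
    (hcrit : IsCritPt n c A) :
    A.IsDiag ∧ ∀ i, A i i = 1 ∨ A i i = -1 := by
  have hoff : ∀ i j : Fin n, i ≠ j → A i j = 0 := by
    intro i j hij
    set P : Matrix (Fin n) (Fin n) ℝ := single i i (1:ℝ) + single j j 1 with hP
    set Q : Matrix (Fin n) (Fin n) ℝ := single i j (1:ℝ) - single j i 1 with hQ
    have e1 : ∑ k, c k * (A * Q) k k = 0 := by
      refine key c A (A * P) (A * Q) (fun t => ?_) hcrit
      rw [hP, hQ, ← mul_R]
      exact mul_mem hA (R_mem hij t)
    have e2 : ∑ k, c k * (Q * A) k k = 0 := by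
      refine key c A (P * A) (Q * A) (fun t => ?_) hcrit
      rw [hP, hQ, ← R_mul_left]
      exact mul_mem (R_mem hij t) hA
    have s1 : ∑ k, c k * (A * Q) k k = c j * A j i - c i * A i j := by
      have hk : ∀ k, c k * (A * Q) k k
          = (if k = j then c j * A j i else 0) - (if k = i then c i * A i j else 0) := by
        intro k
        rw [hQ, mul_sub, Matrix.sub_apply]
        rcases eq_or_ne k j with h | hkj
        · rw [h]
          have h1 : (A * single i j (1:ℝ)) j j = A j i * 1 :=
            mul_single_apply_same 1 i j j A
          have h2 : (A * single j i (1:ℝ)) j j = 0 :=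
            mul_single_apply_of_ne 1 j i j j (Ne.symm hij) A
          rw [h1, h2, if_pos rfl, if_neg (Ne.symm hij)]
          ring
        · have h1 : (A * single i j (1:ℝ)) k k = 0 :=
            mul_single_apply_of_ne 1 i j k k hkj A
          rw [h1, if_neg hkj]
          rcases eq_or_ne k i with h | hki
          · rw [h]
            have h2 : (A * single j i (1:ℝ)) i i = A i j * 1 :=
              mul_single_apply_same 1 j i i A
            rw [h2, if_pos rfl]
            ring
          · have h2 : (A * single j i (1:ℝ)) k k = 0 :=
              mul_single_apply_of_ne 1 j i k k hki A
            rw [h2, if_neg hki]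
            ring
      rw [Finset.sum_congr rfl fun k _ => hk k, Finset.sum_sub_distrib]
      simp
    have s2 : ∑ k, c k * (Q * A) k k = c i * A j i - c j * A i j := by
      have hk : ∀ k, c k * (Q * A) k k
          = (if k = i then c i * A j i else 0) - (if k = j then c j * A i j else 0) := by
        intro k
        rw [hQ, sub_mul, Matrix.sub_apply]
        rcases eq_or_ne k i with h | hki
        · rw [h]
          have h1 : (single i j (1:ℝ) * A) i i = 1 * A j i :=
            single_mul_apply_same 1 i j i A
          have h2 : (single j i (1:ℝ) * A) i i = 0 :=
            single_mul_apply_of_ne 1 j i i i hij A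
          rw [h1, h2, if_pos rfl, if_neg hij]
          ring
        · have h1 : (single i j (1:ℝ) * A) k k = 0 :=
            single_mul_apply_of_ne 1 i j k k hki A
          rw [h1, if_neg hki]
          rcases eq_or_ne k j with h | hkj
          · rw [h]
            have h2 : (single j i (1:ℝ) * A) j j = 1 * A i j :=
              single_mul_apply_same 1 j i j A
            rw [h2, if_pos rfl]
            ring
          · have h2 : (single j i (1:ℝ) * A) k k = 0 :=
              single_mul_apply_of_ne 1 j i k k hkj A
            rw [h2, if_neg hkj]
            ring
      rw [Finset.sum_congr rfl fun k _ => hk k, Finset.sum_sub_distrib]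
      simp
    rw [s1] at e1
    rw [s2] at e2
    -- (c i ^ 2 - c j ^ 2) * A i j = 0, and c i ^ 2 ≠ c j ^ 2
    have hcc : c i ≠ c j := fun h => hij (hc.injective h)
    have hpos : 0 < c i + c j := by
      rcases (hc0 i).lt_or_eq with h | h
      · linarith [hc0 j]
      · rcases (hc0 j).lt_or_eq with h' | h'
        · linarith
        · exact absurd (h.symm.trans h') hcc
    have hsq : (c i - c j) * (c i + c j) * A i j = 0 := by
      linear_combination c j * e2 - c i * e1
    have := mul_eq_zero.mp hsq
    rcases this with h | h
    · exact absurd h (mul_ne_zero (sub_ne_zero.mpr hcc) (ne_of_gt hpos))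
    · exact h
  have hdiag : A.IsDiag := fun i j hij => hoff i j hij
  refine ⟨hdiag, fun i => ?_⟩
  have hu : star A * A = 1 :=
    Matrix.mem_unitaryGroup_iff'.mp (Matrix.mem_specialUnitaryGroup_iff.mp hA).1
  have h1 : ∑ k, A k i * A k i = 1 := by
    have := congrFun (congrFun hu i) i
    rwa [Matrix.star_eq_conjTranspose, conjTranspose_eq_transpose_of_trivial,
      Matrix.mul_apply, Matrix.one_apply_eq] at this
  have h2 : ∑ k, A k i * A k i = A i i * A i i := by
    refine Finset.sum_eq_single i (fun k _ hk => ?_) (by simp)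
    rw [hoff k i hk, zero_mul]
  rw [h2] at h1
  exact mul_self_eq_one_iff.mp h1
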